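/- Let (a_i,b_i)_{i=1}^s be a composition of positive integers with b_s ≥ 2, let λ ∈ ℂ be such that neither λ nor λ−1 is a positive integer and λ ≠ 1, and set λ' = λ−1. Then [{(a_1,1),b_1,…,(a_s,1),b_s};λ] = [{(a_1,0),b_1,…,(a_s,0),b_s};λ'] − (1/λ')·[{(a_1,0),b_1,…,(a_s,0),b_s−1};λ'], where the brackets denote the shifted multiple series defined below. -/

import Mathlib

/-- Strictly decreasing tuples `m 0 > m 1 > ⋯ > m (N-1) ≥ 1` of positive integers,
padded by `0` from position `N` on. -/
def DecTuple (N : ℕ) : Set (ℕ → ℕ) :=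
  {m | (∀ j, j + 1 < N → m (j + 1) < m j) ∧ (∀ j, j < N → 1 ≤ m j) ∧ ∀ j, N ≤ j → m j = 0}

/-- The bracket `[{(a₁,d₁),b₁,…,(a_s,d_s),b_s};λ] =
Σ_{m₁>⋯>m_{B_s}≥1} Πᵢ (m_{B_{i-1}+1} - dᵢ)^{-aᵢ} Π_{j=B_{i-1}+1}^{B_i} (m_j-λ)⁻¹`
(0-based indices). -/
noncomputable def bracket (s : ℕ) (a b d : ℕ → ℕ) (lam : ℂ) : ℂ :=
  ∑' m : DecTuple (∑ t ∈ Finset.range s, b t),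
    ∏ i ∈ Finset.range s,
      (((m.1 (∑ t ∈ Finset.range i, b t) : ℂ) - (d i : ℕ)) ^ a i)⁻¹ *
        ∏ j ∈ Finset.Ico (∑ t ∈ Finset.range i, b t) (∑ t ∈ Finset.range (i + 1), b t),
          ((m.1 j : ℂ) - lam)⁻¹

open Finset

namespace BShift

lemma decTuple_anti {N : ℕ} {m : ℕ → ℕ} (hm : m ∈ DecTuple N) :
    ∀ j k, j ≤ k → k < N → m k ≤ m j := by
  have key : ∀ d j, j + d < N → m (j + d) ≤ m j := by
    intro d
    induction d with
    | zero => intro j _; simp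
    | succ d ih =>
      intro j h
      have h1 : m (j + d + 1) < m (j + d) := hm.1 (j + d) (by omega)
      have h2 : m (j + d) ≤ m j := ih j (by omega)
      show m (j + d + 1) ≤ m j
      omega
  intro j k hjk hk
  obtain ⟨d, rfl⟩ : ∃ d, k = j + d := ⟨k - j, by omega⟩
  exact key d j hk

lemma prod_blocks {M : Type*} [CommMonoid M] (f : ℕ → M) (b : ℕ → ℕ) (s : ℕ) :
    ∏ i ∈ range s, ∏ j ∈ Finset.Ico (∑ t ∈ range i, b t) (∑ t ∈ range (i + 1), b t), f j
      = ∏ j ∈ range (∑ t ∈ range s, b t), f j := by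
  induction s with
  | zero => simp
  | succ n ih =>
    rw [prod_range_succ, ih,
      Finset.prod_range_mul_prod_Ico f (sum_le_sum_of_subset (range_subset_range.2 (Nat.le_succ n)))]

lemma exists_bound (lam : ℂ) (hlam : ∀ p : ℕ, 0 < p → lam ≠ (p : ℂ)) :
    ∃ C : ℝ, 2 ≤ C ∧ ∀ m : ℕ, 1 ≤ m → ‖((m : ℂ) - lam)⁻¹‖ ≤ C * (m : ℝ)⁻¹ := by
  set T : ℕ := Nat.ceil (2 * ‖lam‖) + 1 with hT
  refine ⟨2 + ∑ k ∈ range T, (k : ℝ) * ‖((k : ℂ) - lam)⁻¹‖, ?_, ?_⟩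
  · have : 0 ≤ ∑ k ∈ range T, (k : ℝ) * ‖((k : ℂ) - lam)⁻¹‖ :=
      Finset.sum_nonneg fun k _ => by positivity
    linarith
  · intro m hm
    have hm0 : (0 : ℝ) < m := by exact_mod_cast hm
    rcases Nat.lt_or_ge m T with h | h
    · have hterm : (m : ℝ) * ‖((m : ℂ) - lam)⁻¹‖
          ≤ ∑ k ∈ range T, (k : ℝ) * ‖((k : ℂ) - lam)⁻¹‖ :=
        Finset.single_le_sum (f := fun k : ℕ => (k : ℝ) * ‖((k : ℂ) - lam)⁻¹‖)
          (fun k _ => by positivity) (mem_range.2 h)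
      rw [← div_eq_mul_inv, le_div_iff₀ hm0]
      nlinarith [norm_nonneg (((m : ℂ) - lam)⁻¹)]
    · have hceil : 2 * ‖lam‖ ≤ (Nat.ceil (2 * ‖lam‖) : ℝ) := Nat.le_ceil _
      have hTm : (T : ℝ) ≤ m := by exact_mod_cast h
      have hlamm : 2 * ‖lam‖ ≤ (m : ℝ) - 1 := by
        have : ((Nat.ceil (2 * ‖lam‖) : ℕ) : ℝ) + 1 ≤ (m : ℝ) := by
          rw [hT] at hTm; push_cast at hTm; linarith
        linarith
      have hlow : (m : ℝ) / 2 ≤ ‖(m : ℂ) - lam‖ := by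
        have h1 : ‖(m : ℂ)‖ - ‖lam‖ ≤ ‖(m : ℂ) - lam‖ := norm_sub_norm_le _ _
        rw [RCLike.norm_natCast] at h1
        linarith
      have hpos : (0 : ℝ) < (m : ℝ) / 2 := by linarith
      rw [norm_inv]
      calc ‖(m : ℂ) - lam‖⁻¹ ≤ ((m : ℝ) / 2)⁻¹ := inv_anti₀ hpos hlow
        _ = 2 * (m : ℝ)⁻¹ := by field_simp
      exact mul_le_mul_of_nonneg_right (by
        have : 0 ≤ ∑ k ∈ range T, (k : ℝ) * ‖((k : ℂ) - lam)⁻¹‖ :=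
          Finset.sum_nonneg fun k _ => by positivity
        linarith) (inv_nonneg.2 (le_of_lt hm0))

lemma summable_pi_prod {h : ℕ → ℝ} (h0 : ∀ k, 0 ≤ h k) (hs : Summable h) (n : ℕ) :
    Summable fun v : Fin n → ℕ => ∏ j, h (v j) := by
  induction n with
  | zero =>
    haveI : Unique (Fin 0 → ℕ) := Pi.uniqueOfIsEmpty _
    exact Summable.of_finite (f := fun v : Fin 0 → ℕ => ∏ j, h (v j))
  | succ n ih =>
    have key : Summable (fun p : ℕ × (Fin n → ℕ) => h p.1 * ∏ j, h (p.2 j)) :=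
      Summable.mul_of_nonneg (f := h) (g := fun v : Fin n → ℕ => ∏ j, h (v j)) hs ih (Pi.le_def.mpr h0)
        (Pi.le_def.mpr fun v => Finset.prod_nonneg fun j _ => h0 _)
    have hinj : Function.Injective
        (fun v : Fin (n + 1) → ℕ => ((v 0, fun j : Fin n => v j.succ) : ℕ × (Fin n → ℕ))) := by
      intro v w hvw
      funext j
      refine Fin.cases ?_ ?_ j
      · exact (Prod.ext_iff.1 hvw).1
      · intro i; exact congrFun (Prod.ext_iff.1 hvw).2 i
    have := key.comp_injective hinj
    refine (summable_congr ?_).2 this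
    intro v
    exact Fin.prod_univ_succ fun j => h (v j)

end BShift

namespace BShift2
open BShift

lemma summable_bracket_aux (s : ℕ) (a b : ℕ → ℕ) (ha : ∀ i, i < s → 1 ≤ a i)
    (hb : ∀ i, i < s → 1 ≤ b i) (lam : ℂ) (hlam : ∀ p : ℕ, 0 < p → lam ≠ (p : ℂ)) {N : ℕ}
    (hN : ∑ t ∈ range s, b t = N) :
    Summable (fun m : DecTuple N =>
      ∏ i ∈ range s, ((m.1 (∑ t ∈ range i, b t) : ℂ) ^ a i)⁻¹ *
        ∏ j ∈ Finset.Ico (∑ t ∈ range i, b t) (∑ t ∈ range (i + 1), b t),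
          ((m.1 j : ℂ) - lam)⁻¹) := by
  rcases Nat.eq_zero_or_pos N with hN0 | hN1
  · haveI : Subsingleton (DecTuple N) := by
      constructor
      rintro ⟨m, hm⟩ ⟨m', hm'⟩
      apply Subtype.ext; funext j
      show m j = m' j
      rw [hm.2.2 j (by omega), hm'.2.2 j (by omega)]
    exact Summable.of_finite
  obtain ⟨C, hC2, hC⟩ := exists_bound lam hlam
  have hC0 : (0:ℝ) < C := by linarith
  set p : ℝ := 1 + (N : ℝ)⁻¹ with hp
  have hNR : (0:ℝ) < N := by exact_mod_cast hN1
  have hNinv : (0:ℝ) < (N:ℝ)⁻¹ := inv_pos.2 hNR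
  have hp1 : -p < -1 := by rw [hp]; linarith
  have hsum_h : Summable (fun k : ℕ => C * (k : ℝ) ^ (-p)) :=
    (Real.summable_nat_rpow.2 hp1).mul_left C
  have hG : Summable (fun v : Fin N → ℕ => ∏ j, C * ((v j : ℝ)) ^ (-p)) :=
    summable_pi_prod (fun k => by positivity) hsum_h N
  have hinj : Function.Injective (fun m : DecTuple N => (fun j : Fin N => m.1 j)) := by
    rintro ⟨m, hm⟩ ⟨m', hm'⟩ hmm'
    apply Subtype.ext; funext j
    show m j = m' j
    rcases Nat.lt_or_ge j N with hj | hj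
    · exact congrFun hmm' ⟨j, hj⟩
    · rw [hm.2.2 j hj, hm'.2.2 j hj]
  have hGι := hG.comp_injective hinj
  apply Summable.of_norm
  refine Summable.of_nonneg_of_le (fun m => norm_nonneg _) ?_ hGι
  rintro ⟨m, hm⟩
  show ‖∏ i ∈ range s, ((m (∑ t ∈ range i, b t) : ℂ) ^ a i)⁻¹ *
        ∏ j ∈ Finset.Ico (∑ t ∈ range i, b t) (∑ t ∈ range (i + 1), b t),
          ((m j : ℂ) - lam)⁻¹‖
    ≤ ∏ j : Fin N, C * (((m (j : ℕ)) : ℝ)) ^ (-p)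
  rw [norm_prod]
  have key : ∀ i ∈ range s,
      ‖((m (∑ t ∈ range i, b t) : ℂ) ^ a i)⁻¹ *
        ∏ j ∈ Finset.Ico (∑ t ∈ range i, b t) (∑ t ∈ range (i + 1), b t),
          ((m j : ℂ) - lam)⁻¹‖
      ≤ ∏ j ∈ Finset.Ico (∑ t ∈ range i, b t) (∑ t ∈ range (i + 1), b t),
          C * ((m j : ℝ)) ^ (-p) := by
    intro i hi
    rw [mem_range] at hi
    set Bi := ∑ t ∈ range i, b t with hBidef
    set Bi1 := ∑ t ∈ range (i+1), b t with hBi1def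
    have hBi1 : Bi1 = Bi + b i := sum_range_succ b i
    have hBiN : Bi1 ≤ N := hN ▸ sum_le_sum_of_subset (range_subset_range.2 hi)
    have hblock : ∀ j ∈ Finset.Ico Bi Bi1, Bi ≤ j ∧ j < N := fun j hj =>
      ⟨(mem_Ico.1 hj).1, lt_of_lt_of_le (mem_Ico.1 hj).2 hBiN⟩
    have hheadN : Bi < N := by have := hb i hi; omega
    have hhead1 : 1 ≤ m Bi := hm.2.1 _ hheadN
    have hheadR : (1:ℝ) ≤ ((m Bi : ℕ) : ℝ) := by exact_mod_cast hhead1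
    rw [norm_mul, norm_prod]
    have e2 : ∏ j ∈ Finset.Ico Bi Bi1, ‖((m j : ℂ) - lam)⁻¹‖
        ≤ ∏ j ∈ Finset.Ico Bi Bi1, C * ((m j : ℝ))⁻¹ :=
      prod_le_prod (fun j _ => norm_nonneg _) (fun j hj => hC (m j) (hm.2.1 j (hblock j hj).2))
    have e1 : ‖((m Bi : ℂ) ^ a i)⁻¹‖
        ≤ ∏ j ∈ Finset.Ico Bi Bi1, ((m j : ℝ)) ^ (-(N:ℝ)⁻¹) := by
      have e1a : ‖((m Bi : ℂ) ^ a i)⁻¹‖ ≤ ((m Bi : ℝ))⁻¹ := by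
        rw [norm_inv, norm_pow, RCLike.norm_natCast]
        refine inv_anti₀ (by linarith) ?_
        calc ((m Bi : ℝ)) = ((m Bi : ℝ)) ^ 1 := (pow_one _).symm
          _ ≤ ((m Bi : ℝ)) ^ a i := pow_le_pow_right₀ hheadR (ha i hi)
      refine e1a.trans ?_
      have hconst : ((m Bi : ℝ)) ^ (-(N:ℝ)⁻¹ * (b i : ℝ))
          = ∏ _j ∈ Finset.Ico Bi Bi1, ((m Bi : ℝ)) ^ (-(N:ℝ)⁻¹) := by
        rw [prod_const, Nat.card_Ico, hBi1, Nat.add_sub_cancel_left,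
          ← Real.rpow_natCast (((m Bi : ℝ)) ^ (-(N:ℝ)⁻¹)) (b i),
          ← Real.rpow_mul (by linarith)]
      have h1 : ((m Bi : ℝ))⁻¹ ≤ ((m Bi : ℝ)) ^ (-(N:ℝ)⁻¹ * (b i : ℝ)) := by
        rw [← Real.rpow_neg_one]
        apply Real.rpow_le_rpow_of_exponent_le hheadR
        have hbiN' : b i ≤ N := by omega
        have hbiN : ((b i : ℕ) : ℝ) ≤ (N:ℝ) := by exact_mod_cast hbiN'
        rw [neg_mul]
        apply neg_le_neg
        calc (N:ℝ)⁻¹ * ((b i : ℕ) : ℝ) = ((b i : ℕ) : ℝ)/(N:ℝ) := by ring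
          _ ≤ 1 := (div_le_one hNR).2 hbiN
      refine h1.trans ?_
      rw [hconst]
      apply prod_le_prod
      · intro j hj; positivity
      · intro j hj
        have h1j : (0:ℝ) < ((m j : ℕ) : ℝ) := by
          have h := hm.2.1 j (hblock j hj).2
          have : (1:ℝ) ≤ ((m j : ℕ) : ℝ) := by exact_mod_cast h
          linarith
        have hmono : ((m j : ℕ) : ℝ) ≤ ((m Bi : ℕ) : ℝ) := by
          exact_mod_cast decTuple_anti hm Bi j (hblock j hj).1 (hblock j hj).2
        rw [Real.rpow_neg (by linarith), Real.rpow_neg (by positivity)]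
        exact inv_anti₀ (Real.rpow_pos_of_pos h1j _)
          (Real.rpow_le_rpow (le_of_lt h1j) hmono (by positivity))
    calc ‖((m Bi : ℂ) ^ a i)⁻¹‖ * ∏ j ∈ Finset.Ico Bi Bi1, ‖((m j : ℂ) - lam)⁻¹‖
        ≤ (∏ j ∈ Finset.Ico Bi Bi1, ((m j : ℝ)) ^ (-(N:ℝ)⁻¹)) *
            ∏ j ∈ Finset.Ico Bi Bi1, C * ((m j : ℝ))⁻¹ :=
          mul_le_mul e1 e2 (prod_nonneg fun j _ => norm_nonneg _)
            (prod_nonneg fun j _ => by positivity)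
      _ = ∏ j ∈ Finset.Ico Bi Bi1, C * ((m j : ℝ)) ^ (-p) := by
          rw [← prod_mul_distrib]
          refine prod_congr rfl fun j hj => ?_
          have h1j : (0:ℝ) < ((m j : ℕ) : ℝ) := by
            have h := hm.2.1 j (hblock j hj).2
            have : (1:ℝ) ≤ ((m j : ℕ) : ℝ) := by exact_mod_cast h
            linarith
          rw [hp, show -(1 + (N:ℝ)⁻¹) = -1 + -(N:ℝ)⁻¹ by ring, Real.rpow_add h1j,
            Real.rpow_neg_one]
          ring
  calc ∏ i ∈ range s, ‖((m (∑ t ∈ range i, b t) : ℂ) ^ a i)⁻¹ *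
        ∏ j ∈ Finset.Ico (∑ t ∈ range i, b t) (∑ t ∈ range (i + 1), b t),
          ((m j : ℂ) - lam)⁻¹‖
      ≤ ∏ i ∈ range s, ∏ j ∈ Finset.Ico (∑ t ∈ range i, b t) (∑ t ∈ range (i + 1), b t),
          C * ((m j : ℝ)) ^ (-p) := prod_le_prod (fun i _ => norm_nonneg _) key
    _ = ∏ j ∈ range (∑ t ∈ range s, b t), C * ((m j : ℝ)) ^ (-p) :=
        prod_blocks (fun j => C * ((m j : ℝ)) ^ (-p)) b s
    _ = ∏ j : Fin N, C * (((m (j : ℕ)) : ℝ)) ^ (-p) := by rw [hN, Finset.prod_range]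

end BShift2

namespace BShift3
open BShift BShift2

lemma shift_mem {N : ℕ} (hN : 1 ≤ N) {m : ℕ → ℕ} (hm : m ∈ DecTuple N) :
    (fun j => m j - 1) ∈ DecTuple N ∪ DecTuple (N - 1) := by
  have h2 : ∀ j, j + 1 < N → 2 ≤ m j := fun j hj => by
    have := hm.1 j hj; have := hm.2.1 (j + 1) hj; omega
  by_cases hend : 2 ≤ m (N - 1)
  · left
    refine ⟨fun j hj => ?_, fun j hj => ?_, fun j hj => ?_⟩
    · have := hm.1 j hj; have := hm.2.1 (j + 1) hj
      show m (j + 1) - 1 < m j - 1; omega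
    · show 1 ≤ m j - 1
      rcases Nat.lt_or_ge (j + 1) N with h | h
      · have := h2 j h; omega
      · have hj' : j = N - 1 := by omega
        rw [hj']; omega
    · show m j - 1 = 0
      rw [hm.2.2 j hj]
  · right
    have hend1 : m (N - 1) = 1 := by
      have := hm.2.1 (N - 1) (by omega); omega
    refine ⟨fun j hj => ?_, fun j hj => ?_, fun j hj => ?_⟩
    · have h1 := hm.1 j (by omega); have := hm.2.1 (j + 1) (by omega)
      show m (j + 1) - 1 < m j - 1; omega
    · have := h2 j (by omega)
      show 1 ≤ m j - 1; omega
    · show m j - 1 = 0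
      rcases Nat.lt_or_ge j N with h | h
      · have hj' : j = N - 1 := by omega
        rw [hj', hend1]
      · rw [hm.2.2 j h]

lemma lift_mem {N : ℕ} (hN : 1 ≤ N) {n : ℕ → ℕ}
    (hn : n ∈ DecTuple N ∪ DecTuple (N - 1)) :
    (fun j => if j < N then n j + 1 else 0) ∈ DecTuple N := by
  rcases hn with hn | hn
  · refine ⟨fun j hj => ?_, fun j hj => ?_, fun j hj => ?_⟩
    · show (if j + 1 < N then n (j + 1) + 1 else 0) < if j < N then n j + 1 else 0
      rw [if_pos hj, if_pos (by omega)]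
      have := hn.1 j hj; omega
    · show 1 ≤ if j < N then n j + 1 else 0
      rw [if_pos hj]; omega
    · show (if j < N then n j + 1 else 0) = 0
      rw [if_neg (by omega)]
  · refine ⟨fun j hj => ?_, fun j hj => ?_, fun j hj => ?_⟩
    · show (if j + 1 < N then n (j + 1) + 1 else 0) < if j < N then n j + 1 else 0
      rw [if_pos hj, if_pos (by omega)]
      rcases Nat.lt_or_ge (j + 1) (N - 1) with h | h
      · have := hn.1 j h; omega
      · have hj1 : j + 1 = N - 1 := by omega
        have h0 : n (j + 1) = 0 := by rw [hj1]; exact hn.2.2 (N - 1) le_rfl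
        have h1 : 1 ≤ n j := hn.2.1 j (by omega)
        omega
    · show 1 ≤ if j < N then n j + 1 else 0
      rw [if_pos hj]; omega
    · show (if j < N then n j + 1 else 0) = 0
      rw [if_neg (by omega)]

def shiftEquiv (N : ℕ) (hN : 1 ≤ N) :
    DecTuple N ≃ ↥(DecTuple N ∪ DecTuple (N - 1)) where
  toFun m := ⟨fun j => m.1 j - 1, shift_mem hN m.2⟩
  invFun n := ⟨fun j => if j < N then n.1 j + 1 else 0, lift_mem hN n.2⟩
  left_inv m := by
    apply Subtype.ext; funext j
    show (if j < N then (m.1 j - 1) + 1 else 0) = m.1 j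
    by_cases hj : j < N
    · rw [if_pos hj]
      have := m.2.2.1 j hj; omega
    · rw [if_neg hj]
      exact (m.2.2.2 j (by omega)).symm
  right_inv n := by
    apply Subtype.ext; funext j
    show ((if j < N then n.1 j + 1 else 0) - 1) = n.1 j
    by_cases hj : j < N
    · rw [if_pos hj]; omega
    · rw [if_neg hj]
      have h0 : n.1 j = 0 := by
        rcases n.2 with h | h
        · exact h.2.2 j (by omega)
        · exact h.2.2 j (by omega)
      omega

end BShift3

namespace BShift4
open BShift BShift2 BShift3

lemma bracket_zero_eq' (s : ℕ) (a b : ℕ → ℕ) (lam : ℂ) {N : ℕ}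
    (hN : ∑ t ∈ range s, b t = N) :
    bracket s a b (fun _ => 0) lam
      = ∑' m : DecTuple N,
          ∏ i ∈ range s, ((m.1 (∑ t ∈ range i, b t) : ℂ) ^ a i)⁻¹ *
            ∏ j ∈ Finset.Ico (∑ t ∈ range i, b t) (∑ t ∈ range (i + 1), b t),
              ((m.1 j : ℂ) - lam)⁻¹ := by
  subst hN
  unfold bracket
  apply tsum_congr
  intro m
  refine Finset.prod_congr rfl fun i _ => ?_
  norm_num

lemma step_bij (s' : ℕ) (a b : ℕ → ℕ) (hb : ∀ i, i < s' + 1 → 1 ≤ b i) (hbs : 2 ≤ b s')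
    (lam : ℂ) :
    bracket (s' + 1) a b (fun _ => 1) lam
      = ∑' n : ↥(DecTuple (∑ t ∈ range (s' + 1), b t) ∪
            DecTuple ((∑ t ∈ range (s' + 1), b t) - 1)),
          ∏ i ∈ range (s' + 1), ((n.1 (∑ t ∈ range i, b t) : ℂ) ^ a i)⁻¹ *
            ∏ j ∈ Finset.Ico (∑ t ∈ range i, b t) (∑ t ∈ range (i + 1), b t),
              ((n.1 j : ℂ) - (lam - 1))⁻¹ := by
  have hN1 : 1 ≤ ∑ t ∈ range (s' + 1), b t :=
    le_trans (by omega : 1 ≤ b s')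
      (Finset.single_le_sum (f := b) (fun t _ => Nat.zero_le _) (self_mem_range_succ s'))
  unfold bracket
  refine Eq.trans ?_ (Equiv.tsum_eq (shiftEquiv _ hN1) _)
  apply tsum_congr
  intro m
  simp only [shiftEquiv, Equiv.coe_fn_mk]
  refine Finset.prod_congr rfl fun i hi => ?_
  rw [mem_range] at hi
  have hBiN : (∑ t ∈ range (i + 1), b t) ≤ ∑ t ∈ range (s' + 1), b t :=
    sum_le_sum_of_subset (range_subset_range.2 hi)
  have hheadN : (∑ t ∈ range i, b t) < ∑ t ∈ range (s' + 1), b t := by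
    have h1 := hb i hi
    have h2 : ∑ t ∈ range (i + 1), b t = (∑ t ∈ range i, b t) + b i := sum_range_succ b i
    omega
  have hhead1 : 1 ≤ m.1 (∑ t ∈ range i, b t) := m.2.2.1 _ hheadN
  congr 1
  · rw [Nat.cast_sub hhead1]
  · refine Finset.prod_congr rfl fun j hj => ?_
    have hjN : j < ∑ t ∈ range (s' + 1), b t := lt_of_lt_of_le (mem_Ico.1 hj).2 hBiN
    have h1 : 1 ≤ m.1 j := m.2.2.1 j hjN
    rw [Nat.cast_sub h1]
    push_cast
    ring

lemma step_last (s' : ℕ) (a b : ℕ → ℕ) (hbs : 2 ≤ b s') (mu : ℂ)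
    {M : ℕ} (hM : M + 1 = ∑ t ∈ range (s' + 1), b t) {n : ℕ → ℕ} (hn : n ∈ DecTuple M) :
    (∏ i ∈ range (s' + 1), ((n (∑ t ∈ range i, b t) : ℂ) ^ a i)⁻¹ *
      ∏ j ∈ Finset.Ico (∑ t ∈ range i, b t) (∑ t ∈ range (i + 1), b t),
        ((n j : ℂ) - mu)⁻¹)
    = ((0 : ℂ) - mu)⁻¹ *
      ∏ i ∈ range (s' + 1),
        ((n (∑ t ∈ range i, (fun k => if k = s' then b k - 1 else b k) t) : ℂ) ^ a i)⁻¹ *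
          ∏ j ∈ Finset.Ico (∑ t ∈ range i, (fun k => if k = s' then b k - 1 else b k) t)
              (∑ t ∈ range (i + 1), (fun k => if k = s' then b k - 1 else b k) t),
            ((n j : ℂ) - mu)⁻¹ := by
  have hB' : ∀ i, i ≤ s' → (∑ t ∈ range i, (fun k => if k = s' then b k - 1 else b k) t)
      = ∑ t ∈ range i, b t := by
    intro i hi
    refine Finset.sum_congr rfl fun t ht => ?_
    rw [mem_range] at ht
    simp only [if_neg (by omega : ¬ t = s')]
  have hsum_succ : ∑ t ∈ range (s' + 1), b t = (∑ t ∈ range s', b t) + b s' :=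
    sum_range_succ b s'
  have hB's1 : (∑ t ∈ range (s' + 1), (fun k => if k = s' then b k - 1 else b k) t) = M := by
    rw [sum_range_succ, hB' s' le_rfl]
    simp only [ite_true, eq_self_iff_true, if_true]
    omega
  have hsame : (∏ i ∈ range s',
        ((n (∑ t ∈ range i, (fun k => if k = s' then b k - 1 else b k) t) : ℂ) ^ a i)⁻¹ *
          ∏ j ∈ Finset.Ico (∑ t ∈ range i, (fun k => if k = s' then b k - 1 else b k) t)
              (∑ t ∈ range (i + 1), (fun k => if k = s' then b k - 1 else b k) t),
            ((n j : ℂ) - mu)⁻¹)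
      = ∏ i ∈ range s', ((n (∑ t ∈ range i, b t) : ℂ) ^ a i)⁻¹ *
          ∏ j ∈ Finset.Ico (∑ t ∈ range i, b t) (∑ t ∈ range (i + 1), b t),
            ((n j : ℂ) - mu)⁻¹ := by
    refine Finset.prod_congr rfl fun i hi => ?_
    rw [mem_range] at hi
    rw [hB' i (le_of_lt hi), hB' (i + 1) hi]
  rw [prod_range_succ, prod_range_succ, hB' s' le_rfl, hB's1, hsame, ← hM,
    Finset.prod_Ico_succ_top (by omega : (∑ t ∈ range s', b t) ≤ M), hn.2.2 M le_rfl]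
  push_cast
  ring

end BShift4


/-- **Lemma (iii)(a):** if `b_s ≥ 2` and `λ' = λ - 1` then
`[{(a₁,1),b₁,…,(a_s,1),b_s};λ]
  = [{(a₁,0),b₁,…,(a_s,0),b_s};λ'] - (1/λ')·[{(a₁,0),b₁,…,(a_s,0),b_s - 1};λ']`. -/
theorem bracket_shift_all (s : ℕ) (hs : 1 ≤ s) (a b : ℕ → ℕ)
    (ha : ∀ i, i < s → 1 ≤ a i) (hb : ∀ i, i < s → 1 ≤ b i) (hbs : 2 ≤ b (s - 1))
    (lam : ℂ) (hlam : ∀ p : ℕ, 0 < p → lam ≠ (p : ℂ))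
    (hlam' : ∀ p : ℕ, 0 < p → lam - 1 ≠ (p : ℂ)) (hlam1 : lam ≠ 1) :
    bracket s a b (fun _ => 1) lam
      = bracket s a b (fun _ => 0) (lam - 1)
        - (lam - 1)⁻¹ *
            bracket s a (fun i => if i = s - 1 then b i - 1 else b i)
              (fun _ => 0) (lam - 1) := by
  obtain ⟨s', rfl⟩ : ∃ s', s = s' + 1 := ⟨s - 1, by omega⟩
  simp only [Nat.add_sub_cancel] at hbs ⊢
  have hNpos : 2 ≤ ∑ t ∈ range (s' + 1), b t :=
    le_trans hbs (Finset.single_le_sum (f := b) (fun t _ => Nat.zero_le _)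
      (self_mem_range_succ s'))
  have hM : ((∑ t ∈ range (s' + 1), b t) - 1) + 1 = ∑ t ∈ range (s' + 1), b t := by omega
  have hb' : ∀ i, i < s' + 1 → 1 ≤ (fun k => if k = s' then b k - 1 else b k) i := by
    intro i hi
    by_cases h : i = s'
    · subst h; simp only [ite_true, eq_self_iff_true, if_true]; omega
    · simp only [if_neg h]; exact hb i hi
  have hsumb' : ∑ t ∈ range (s' + 1), (fun k => if k = s' then b k - 1 else b k) t
      = (∑ t ∈ range (s' + 1), b t) - 1 := by
    rw [sum_range_succ, sum_range_succ b s']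
    have heq : ∑ t ∈ range s', (fun k => if k = s' then b k - 1 else b k) t
        = ∑ t ∈ range s', b t :=
      Finset.sum_congr rfl fun t ht => by
        rw [mem_range] at ht
        simp only [if_neg (by omega : ¬ t = s')]
    rw [heq]
    simp only [ite_true, eq_self_iff_true, if_true]
    omega
  have hdisj : Disjoint (DecTuple (∑ t ∈ range (s' + 1), b t))
      (DecTuple ((∑ t ∈ range (s' + 1), b t) - 1)) := by
    rw [Set.disjoint_left]
    intro m h1 h2
    have ha1 := h1.2.1 ((∑ t ∈ range (s' + 1), b t) - 1) (by omega)
    have ha2 := h2.2.2 ((∑ t ∈ range (s' + 1), b t) - 1) le_rfl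
    omega
  have hsum1 := BShift2.summable_bracket_aux (s' + 1) a b ha hb (lam - 1) hlam' rfl
  have hsumF' := BShift2.summable_bracket_aux (s' + 1) a
    (fun k => if k = s' then b k - 1 else b k) ha hb' (lam - 1) hlam' hsumb'
  have hsum2 : Summable (fun nn : DecTuple ((∑ t ∈ range (s' + 1), b t) - 1) =>
      ∏ i ∈ range (s' + 1), ((nn.1 (∑ t ∈ range i, b t) : ℂ) ^ a i)⁻¹ *
        ∏ j ∈ Finset.Ico (∑ t ∈ range i, b t) (∑ t ∈ range (i + 1), b t),
          ((nn.1 j : ℂ) - (lam - 1))⁻¹) := by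
    refine (summable_congr ?_).2 (hsumF'.mul_left ((0 : ℂ) - (lam - 1))⁻¹)
    intro nn
    exact BShift4.step_last s' a b hbs (lam - 1) hM nn.2
  rw [BShift4.step_bij s' a b hb hbs lam]
  rw [Summable.tsum_union_disjoint (f := fun m : ℕ → ℕ =>
      ∏ i ∈ range (s' + 1), ((m (∑ t ∈ range i, b t) : ℂ) ^ a i)⁻¹ *
        ∏ j ∈ Finset.Ico (∑ t ∈ range i, b t) (∑ t ∈ range (i + 1), b t),
          ((m j : ℂ) - (lam - 1))⁻¹) hdisj hsum1 hsum2]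
  rw [BShift4.bracket_zero_eq' (s' + 1) a b (lam - 1) rfl,
    BShift4.bracket_zero_eq' (s' + 1) a (fun k => if k = s' then b k - 1 else b k) (lam - 1) hsumb']
  have hT2 : (∑' nn : DecTuple ((∑ t ∈ range (s' + 1), b t) - 1),
        ∏ i ∈ range (s' + 1), ((nn.1 (∑ t ∈ range i, b t) : ℂ) ^ a i)⁻¹ *
          ∏ j ∈ Finset.Ico (∑ t ∈ range i, b t) (∑ t ∈ range (i + 1), b t),
            ((nn.1 j : ℂ) - (lam - 1))⁻¹)
      = ((0 : ℂ) - (lam - 1))⁻¹ *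
          ∑' nn : DecTuple ((∑ t ∈ range (s' + 1), b t) - 1),
            ∏ i ∈ range (s' + 1),
              ((nn.1 (∑ t ∈ range i, (fun k => if k = s' then b k - 1 else b k) t) : ℂ)
                  ^ a i)⁻¹ *
                ∏ j ∈ Finset.Ico (∑ t ∈ range i, (fun k => if k = s' then b k - 1 else b k) t)
                    (∑ t ∈ range (i + 1), (fun k => if k = s' then b k - 1 else b k) t),
                  ((nn.1 j : ℂ) - (lam - 1))⁻¹ := by
    rw [← tsum_mul_left]
    exact tsum_congr fun nn => BShift4.step_last s' a b hbs (lam - 1) hM nn.2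
  rw [hT2]
  have hneg : ((0 : ℂ) - (lam - 1))⁻¹ = -((lam - 1)⁻¹) := by
    rw [zero_sub, inv_neg]
  rw [hneg]
  ring
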